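/- For all tensors A, B ∈ ℂ^{n1×n2×n3}, |⟨A, B⟩| ≤ ‖A‖ · ‖B‖_TTNN, i.e. the tensor spectral norm and the transformed tensor nuclear norm are dual to each other with respect to the entrywise inner product. -/

import Mathlib

open scoped BigOperators ComplexConjugate
open MeasureTheory Matrix

noncomputable section

/-- A third-order complex tensor. -/
abbrev Tensor (n1 n2 n3 : ℕ) : Type := Fin n1 → Fin n2 → Fin n3 → ℂ

namespace Tensor

variable {n1 n2 n3 n4 r : ℕ}

/-- The `t`-th frontal slice of the transformed tensor `Φ[A]`. -/
def slice (Φ : Matrix (Fin n3) (Fin n3) ℂ) (A : Tensor n1 n2 n3) (t : Fin n3) :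
    Matrix (Fin n1) (Fin n2) ℂ :=
  Matrix.of fun i j => ∑ k, Φ t k * A i j k

/-- Reconstruct a tensor from its transformed frontal slices (inverse transform `Φᴴ[·]`). -/
def unslice (Φ : Matrix (Fin n3) (Fin n3) ℂ)
    (M : Fin n3 → Matrix (Fin n1) (Fin n2) ℂ) : Tensor n1 n2 n3 :=
  fun i j k => ∑ t, (starRingEnd ℂ) (Φ t k) * M t i j

/-- The Φ-product `A ⋄ B`. -/
def tprod (Φ : Matrix (Fin n3) (Fin n3) ℂ) (A : Tensor n1 n2 n3) (B : Tensor n2 n4 n3) :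
    Tensor n1 n4 n3 :=
  unslice Φ fun t => slice Φ A t * slice Φ B t

/-- The conjugate transpose `Aᴴ` with respect to `Φ`. -/
def tconj (Φ : Matrix (Fin n3) (Fin n3) ℂ) (A : Tensor n1 n2 n3) : Tensor n2 n1 n3 :=
  unslice Φ fun t => (slice Φ A t)ᴴ

/-- Frobenius norm of a tensor. -/
def frob (A : Tensor n1 n2 n3) : ℝ :=
  Real.sqrt (∑ i, ∑ j, ∑ k, Complex.normSq (A i j k))

/-- Entrywise inner product `⟨A, B⟩ = Σ conj(A) B`. -/
def tinner (A B : Tensor n1 n2 n3) : ℂ :=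
  ∑ i, ∑ j, ∑ k, (starRingEnd ℂ) (A i j k) * B i j k

/-- `‖A‖_∞`, the max modulus of the entries. -/
def inftyNorm (A : Tensor n1 n2 n3) : ℝ :=
  ⨆ i, ⨆ j, ⨆ k, ‖A i j k‖

/-- `‖A‖_{∞,2}`. -/
def infty2Norm (A : Tensor n1 n2 n3) : ℝ :=
  max (⨆ i : Fin n1, Real.sqrt (∑ b, ∑ k, Complex.normSq (A i b k)))
      (⨆ j : Fin n2, Real.sqrt (∑ a, ∑ k, Complex.normSq (A a j k)))

/-- The weighted norm `‖A‖_{∞,w}` for a weight vector `w`. -/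
def inftyWNorm (w : Fin n3 → ℝ) (A : Tensor n1 n2 n3) : ℝ :=
  max (⨆ i : Fin n1, Real.sqrt (∑ b, ∑ k, (w k) ^ 2 * Complex.normSq (A i b k)))
      (⨆ j : Fin n2, Real.sqrt (∑ a, ∑ k, (w k) ^ 2 * Complex.normSq (A a j k)))

/-- Spectral norm of a complex matrix (ℓ²→ℓ² operator norm). -/
def specNormM {m n : ℕ} (M : Matrix (Fin m) (Fin n) ℂ) : ℝ :=
  ‖LinearMap.toContinuousLinearMap (Matrix.toEuclideanLin M)‖

/-- Nuclear norm of a complex matrix: the sum of its singular values. -/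
def nuclearNormM {m n : ℕ} (M : Matrix (Fin m) (Fin n) ℂ) : ℝ :=
  ∑ i, Real.sqrt ((Matrix.isHermitian_conjTranspose_mul_self M).eigenvalues i)

/-- Tensor spectral norm: max of spectral norms of transformed frontal slices. -/
def specNorm (Φ : Matrix (Fin n3) (Fin n3) ℂ) (A : Tensor n1 n2 n3) : ℝ :=
  ⨆ t, specNormM (slice Φ A t)

/-- Transformed tensor nuclear norm. -/
def ttnn (Φ : Matrix (Fin n3) (Fin n3) ℂ) (A : Tensor n1 n2 n3) : ℝ :=
  ∑ t, nuclearNormM (slice Φ A t)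

/-- The sampling projection `P_Ω`. -/
def projOmega (Ω : Set (Fin n1 × Fin n2 × Fin n3)) (A : Tensor n1 n2 n3) :
    Tensor n1 n2 n3 :=
  fun i j k => Ω.indicator (fun p => A p.1 p.2.1 p.2.2) (i, j, k)

/-- The column-basis tensor `e_ik ∈ ℂ^{n×1×n3}`. -/
def colBasis {n n3 : ℕ} (i : Fin n) (k : Fin n3) : Tensor n 1 n3 :=
  fun a _ c => if a = i ∧ c = k then 1 else 0

/-- The unit tensor `E_ijk`. -/
def unitTensor (i : Fin n1) (j : Fin n2) (k : Fin n3) : Tensor n1 n2 n3 :=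
  fun a b c => if a = i ∧ b = j ∧ c = k then 1 else 0

/-- The orthogonal projection `P_T` onto the subspace `T` determined by `U, V`. -/
def projT (Φ : Matrix (Fin n3) (Fin n3) ℂ) (U : Tensor n1 r n3) (V : Tensor n2 r n3)
    (X : Tensor n1 n2 n3) : Tensor n1 n2 n3 :=
  tprod Φ (tprod Φ U (tconj Φ U)) X + tprod Φ X (tprod Φ V (tconj Φ V))
    - tprod Φ (tprod Φ (tprod Φ U (tconj Φ U)) X) (tprod Φ V (tconj Φ V))

/-- `P_{T⊥}(X) = X - P_T(X)`. -/
def projTperp (Φ : Matrix (Fin n3) (Fin n3) ℂ) (U : Tensor n1 r n3) (V : Tensor n2 r n3)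
    (X : Tensor n1 n2 n3) : Tensor n1 n2 n3 :=
  X - projT Φ U V X

/-- Operator norm of a map on tensors, w.r.t. the Frobenius norm. -/
def opNorm (L : Tensor n1 n2 n3 → Tensor n1 n2 n3) : ℝ :=
  sSup ((fun X => frob (L X)) '' {X | frob X ≤ 1})

/-- A skinny transformed tensor SVD `Z = U ⋄ S ⋄ Vᴴ`. -/
structure SkinnySVD (Φ : Matrix (Fin n3) (Fin n3) ℂ) (Z : Tensor n1 n2 n3) (r : ℕ)
    (U : Tensor n1 r n3) (S : Tensor r r n3) (V : Tensor n2 r n3) : Prop where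
  factor : Z = tprod Φ (tprod Φ U S) (tconj Φ V)
  U_orth : ∀ t, (slice Φ U t)ᴴ * slice Φ U t = 1
  V_orth : ∀ t, (slice Φ V t)ᴴ * slice Φ V t = 1
  S_offdiag : ∀ t i j, i ≠ j → slice Φ S t i j = 0
  S_diag_real_nonneg : ∀ t i, (slice Φ S t i i).im = 0 ∧ 0 ≤ (slice Φ S t i i).re

/-- The tensor incoherence conditions with parameter μ. -/
def Incoherent (Φ : Matrix (Fin n3) (Fin n3) ℂ) (Z : Tensor n1 n2 n3)
    (U : Tensor n1 r n3) (V : Tensor n2 r n3) (μ : ℝ) : Prop :=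
  (∀ (i : Fin n1) (k : Fin n3),
      (frob (tprod Φ (tconj Φ U) (colBasis i k))) ^ 2
        ≤ μ * (∑ t, ((slice Φ Z t).rank : ℝ)) / (n1 * n3)) ∧
  (∀ (j : Fin n2) (k : Fin n3),
      (frob (tprod Φ (tconj Φ V) (colBasis j k))) ^ 2
        ≤ μ * (∑ t, ((slice Φ Z t).rank : ℝ)) / (n2 * n3))

/-- Bernoulli measure on `Bool` with success probability ρ. -/
def berMeasure (ρ : ℝ) : Measure Bool :=
  ρ.toNNReal • Measure.dirac true + (1 - ρ).toNNReal • Measure.dirac false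

instance (ρ : ℝ) : IsFiniteMeasure (berMeasure ρ) := by
  unfold berMeasure; infer_instance

/-- The i.i.d. Bernoulli sampling model `Ω ~ Ber(ρ)`. -/
def berPi (n1 n2 n3 : ℕ) (ρ : ℝ) : Measure ((Fin n1 × Fin n2 × Fin n3) → Bool) :=
  Measure.pi fun _ => berMeasure ρ

/-- The random set `Ω` determined by a Bernoulli sample. -/
def omegaSet {n1 n2 n3 : ℕ} (ω : (Fin n1 × Fin n2 × Fin n3) → Bool) :
    Set (Fin n1 × Fin n2 × Fin n3) := {p | ω p = true}

end Tensor

open Tensor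



section Aux

open Complex in
/-- Duality of matrix spectral and nuclear norms. -/
lemma matrix_dual {m n : ℕ} (M N : Matrix (Fin m) (Fin n) ℂ) :
    ‖∑ i, ∑ j, (starRingEnd ℂ) (M i j) * N i j‖
      ≤ Tensor.specNormM M * Tensor.nuclearNormM N := by
  classical
  set hN := Matrix.isHermitian_conjTranspose_mul_self N with hNdef
  set b := hN.eigenvectorBasis with hb
  have hmv : ∀ t, (Nᴴ * N) *ᵥ ⇑(b t) = hN.eigenvalues t • ⇑(b t) :=
    fun t => hN.mulVec_eigenvectorBasis t
  have hbnorm : ∀ t, ‖b t‖ = 1 := fun t => hN.eigenvectorBasis.orthonormal.1 t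
  set V : Matrix (Fin n) (Fin n) ℂ := (hN.eigenvectorUnitary : Matrix (Fin n) (Fin n) ℂ)
    with hVdef
  have hVmem : V ∈ Matrix.unitaryGroup (Fin n) ℂ := hN.eigenvectorUnitary.2
  have hVV : V * Vᴴ = 1 := by
    simpa [Matrix.star_eq_conjTranspose] using (Matrix.mem_unitaryGroup_iff.mp hVmem)
  -- column t of V is the eigenvector b t
  have hcol : ∀ t a, V a t = b t a := fun t a => hN.eigenvectorUnitary_apply a t
  -- step 1: the inner product is a trace
  have h1 : ∑ i, ∑ j, (starRingEnd ℂ) (M i j) * N i j = (Mᴴ * N).trace := by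
    rw [Finset.sum_comm]
    simp [Matrix.trace, Matrix.diag, Matrix.mul_apply, Matrix.conjTranspose_apply]
  -- step 2: cycle the trace with V
  have h2 : (Mᴴ * N).trace = (Vᴴ * (Mᴴ * N) * V).trace := by
    rw [Matrix.trace_mul_cycle, ← Matrix.mul_assoc, hVV, Matrix.one_mul]
  -- step 3: diagonal entries are inner products
  have h3 : ∀ t : Fin n, (Vᴴ * (Mᴴ * N) * V) t t
      = (inner ℂ ((WithLp.equiv 2 (Fin m → ℂ)).symm (M *ᵥ ⇑(b t)))
          ((WithLp.equiv 2 (Fin m → ℂ)).symm (N *ᵥ ⇑(b t))) : ℂ) := by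
    intro t
    rw [WithLp.equiv_symm_apply, EuclideanSpace.inner_toLp_toLp, dotProduct_comm]
    have : (Vᴴ * (Mᴴ * N) * V) t t
        = star (fun a => V a t) ⬝ᵥ ((Mᴴ * N) *ᵥ (fun a => V a t)) := by
      rw [Matrix.mul_assoc]
      simp [Matrix.mul_apply, Matrix.mulVec, dotProduct,
        Matrix.conjTranspose_apply]
    rw [this]
    have hfun : (fun a => V a t) = ⇑(b t) := funext fun a => hcol t a
    rw [hfun, ← Matrix.mulVec_mulVec, Matrix.dotProduct_mulVec, ← Matrix.star_mulVec]
  -- norm of N *ᵥ b t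
  have hNv : ∀ t : Fin n, ‖(WithLp.equiv 2 (Fin m → ℂ)).symm (N *ᵥ ⇑(b t))‖
      = Real.sqrt (hN.eigenvalues t) := by
    intro t
    have hx : (inner ℂ ((WithLp.equiv 2 (Fin m → ℂ)).symm (N *ᵥ ⇑(b t)))
        ((WithLp.equiv 2 (Fin m → ℂ)).symm (N *ᵥ ⇑(b t))) : ℂ)
        = (hN.eigenvalues t : ℂ) := by
      rw [WithLp.equiv_symm_apply, EuclideanSpace.inner_toLp_toLp, dotProduct_comm, Matrix.star_mulVec,
        ← Matrix.dotProduct_mulVec, Matrix.mulVec_mulVec, hmv t]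
      have hb1 : (inner ℂ (b t) (b t) : ℂ) = 1 := by
        rw [inner_self_eq_norm_sq_to_K (𝕜 := ℂ) (b t), hbnorm t]
        norm_num
      have : star ⇑(b t) ⬝ᵥ (hN.eigenvalues t • ⇑(b t))
          = (hN.eigenvalues t : ℂ) * (star ⇑(b t) ⬝ᵥ ⇑(b t)) := by
        simp [dotProduct, Finset.mul_sum, Complex.real_smul]
        exact Finset.sum_congr rfl fun a _ => by ring
      rw [this]
      have hbb : (star ⇑(b t) ⬝ᵥ ⇑(b t) : ℂ) = 1 := by
        rw [dotProduct_comm, ← EuclideanSpace.inner_eq_star_dotProduct (b t) (b t)]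
        exact hb1
      rw [hbb, mul_one]
    have := norm_eq_sqrt_re_inner (𝕜 := ℂ) ((WithLp.equiv 2 (Fin m → ℂ)).symm (N *ᵥ ⇑(b t)))
    rw [this, hx]
    simp
  -- norm of M *ᵥ b t
  have hMv : ∀ t : Fin n, ‖(WithLp.equiv 2 (Fin m → ℂ)).symm (M *ᵥ ⇑(b t))‖
      ≤ Tensor.specNormM M := by
    intro t
    have hb1 : ‖b t‖ = 1 := hbnorm t
    have : (WithLp.equiv 2 (Fin m → ℂ)).symm (M *ᵥ ⇑(b t))
        = (LinearMap.toContinuousLinearMap (Matrix.toEuclideanLin M)) (b t) := rfl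
    rw [this]
    calc ‖(LinearMap.toContinuousLinearMap (Matrix.toEuclideanLin M)) (b t)‖
        ≤ Tensor.specNormM M * ‖b t‖ := ContinuousLinearMap.le_opNorm _ _
      _ = Tensor.specNormM M := by rw [hb1, mul_one]
  -- assemble
  rw [h1, h2]
  have htr : (Vᴴ * (Mᴴ * N) * V).trace = ∑ t, (Vᴴ * (Mᴴ * N) * V) t t := rfl
  rw [htr]
  calc ‖∑ t, (Vᴴ * (Mᴴ * N) * V) t t‖
      ≤ ∑ t, ‖(Vᴴ * (Mᴴ * N) * V) t t‖ := norm_sum_le _ _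
    _ ≤ ∑ t, Tensor.specNormM M * Real.sqrt (hN.eigenvalues t) := by
        refine Finset.sum_le_sum fun t _ => ?_
        rw [h3 t]
        calc ‖inner ℂ _ _‖
            ≤ ‖(WithLp.equiv 2 (Fin m → ℂ)).symm (M *ᵥ ⇑(b t))‖
              * ‖(WithLp.equiv 2 (Fin m → ℂ)).symm (N *ᵥ ⇑(b t))‖ := by
                exact norm_inner_le_norm _ _
          _ ≤ Tensor.specNormM M * Real.sqrt (hN.eigenvalues t) := by
              rw [hNv t]
              exact mul_le_mul_of_nonneg_right (hMv t) (Real.sqrt_nonneg _)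
    _ = Tensor.specNormM M * Tensor.nuclearNormM N := by
        rw [Tensor.nuclearNormM, Finset.mul_sum]

/-- Parseval for a unitary transform of tubes. -/
lemma tinner_slices {n1 n2 n3 : ℕ} (Φ : Matrix (Fin n3) (Fin n3) ℂ)
    (hΦ : Φ ∈ Matrix.unitaryGroup (Fin n3) ℂ) (A B : Tensor n1 n2 n3) :
    Tensor.tinner A B
      = ∑ t, ∑ i, ∑ j, (starRingEnd ℂ) (Tensor.slice Φ A t i j) * Tensor.slice Φ B t i j := by
  classical
  have hΦΦ : Φᴴ * Φ = 1 := by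
    simpa [Matrix.star_eq_conjTranspose] using (Matrix.mem_unitaryGroup_iff'.mp hΦ)
  rw [show (∑ t, ∑ i, ∑ j, (starRingEnd ℂ) (Tensor.slice Φ A t i j) * Tensor.slice Φ B t i j)
      = ∑ i, ∑ j, ∑ t, (starRingEnd ℂ) (Tensor.slice Φ A t i j) * Tensor.slice Φ B t i j by
    rw [Finset.sum_comm]
    exact Finset.sum_congr rfl fun i _ => Finset.sum_comm]
  unfold Tensor.tinner
  refine Finset.sum_congr rfl fun i _ => Finset.sum_congr rfl fun j _ => ?_
  have hA : ∀ t, Tensor.slice Φ A t i j = (Φ *ᵥ (A i j)) t := fun t => rfl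
  have hB : ∀ t, Tensor.slice Φ B t i j = (Φ *ᵥ (B i j)) t := fun t => rfl
  calc ∑ k, (starRingEnd ℂ) (A i j k) * B i j k
      = star (A i j) ⬝ᵥ (B i j) := by
        simp [dotProduct]
    _ = star (Φ *ᵥ A i j) ⬝ᵥ (Φ *ᵥ B i j) := by
        rw [Matrix.star_mulVec, ← Matrix.dotProduct_mulVec, Matrix.mulVec_mulVec, hΦΦ,
          Matrix.one_mulVec]
    _ = ∑ t, (starRingEnd ℂ) (Tensor.slice Φ A t i j) * Tensor.slice Φ B t i j := by
        simp [dotProduct, hA, hB]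

lemma nuclearNormM_nonneg {m n : ℕ} (N : Matrix (Fin m) (Fin n) ℂ) :
    0 ≤ Tensor.nuclearNormM N :=
  Finset.sum_nonneg fun _ _ => Real.sqrt_nonneg _

end Aux

/-- duality between the tensor spectral norm and the TTNN. -/
theorem statement16 {n1 n2 n3 : ℕ} (Φ : Matrix (Fin n3) (Fin n3) ℂ)
    (hΦ : Φ ∈ Matrix.unitaryGroup (Fin n3) ℂ) :
    ∀ A B : Tensor n1 n2 n3,
      ‖tinner A B‖ ≤ specNorm Φ A * ttnn Φ B := by
  intro A B
  rw [tinner_slices Φ hΦ A B]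
  calc ‖∑ t, ∑ i, ∑ j, (starRingEnd ℂ) (slice Φ A t i j) * slice Φ B t i j‖
      ≤ ∑ t, ‖∑ i, ∑ j, (starRingEnd ℂ) (slice Φ A t i j) * slice Φ B t i j‖ :=
        norm_sum_le _ _
    _ ≤ ∑ t, specNormM (slice Φ A t) * nuclearNormM (slice Φ B t) :=
        Finset.sum_le_sum fun t _ => matrix_dual _ _
    _ ≤ ∑ t, specNorm Φ A * nuclearNormM (slice Φ B t) := by
        refine Finset.sum_le_sum fun t _ => ?_
        have hbd : BddAbove (Set.range fun s => specNormM (slice Φ A s)) :=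
          (Set.finite_range _).bddAbove
        exact mul_le_mul_of_nonneg_right (le_ciSup hbd t) (nuclearNormM_nonneg _)
    _ = specNorm Φ A * ttnn Φ B := by rw [ttnn, Finset.mul_sum]
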